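/- Assume the model is nondegenerate and in the first family of (G0), i.e. d_{-1,-1} = d_{-1,0} = d_{0,-1} = 0. Then ([0:1],[0:1]) is a singular point of the kernel curve Ē_t; moreover Δ₁(x,1) = α₂x² + α₃x³ + α₄x⁴ and Δ₂(y,1) = β₂y² + β₃y³ + β₄y⁴, with α₂ = β₂ ≠ 0, α₃² - 4α₂α₄ ≠ 0 and β₃² - 4β₂β₄ ≠ 0; in particular Δ₁ (respectively Δ₂) has a double root at [0:1] and its two remaining roots in ℙ¹(ℂ) are simple, distinct from each other and distinct from [0:1]. -/

import Mathlib

open MvPolynomial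

noncomputable section

variable (d : ℤ → ℤ → ℝ) (t : ℝ)

/-- The kernel polynomial `K(x,y,t) = xy(1 - t·Σ_{(i,j)∈{-1,0,1}²} d_{i,j} x^i y^j)`
as an element of `ℂ[x,y] = MvPolynomial (Fin 2) ℂ` (variable `0` is `x`, variable `1` is `y`). -/
def kernelK : MvPolynomial (Fin 2) ℂ :=
  X 0 * X 1 - C ((t : ℝ) : ℂ) *
    ∑ i ∈ Finset.range 3, ∑ j ∈ Finset.range 3,
      C ((d ((i : ℤ) - 1) ((j : ℤ) - 1) : ℝ) : ℂ) * X 0 ^ i * X 1 ^ j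

/-- The standing hypotheses: the weights `d_{i,j}` for `(i,j) ∈ {-1,0,1}²` lie in `[0,1]`
and sum to `1`, `t ∈ (0,1)`, and `t` is transcendental over `ℚ(d_{i,j})`, i.e. no nonzero
polynomial with coefficients in the subfield of `ℝ` generated by the `d_{i,j}` vanishes at `t`. -/
def WalkHyp : Prop :=
  (∀ i ∈ ({-1, 0, 1} : Set ℤ), ∀ j ∈ ({-1, 0, 1} : Set ℤ), 0 ≤ d i j ∧ d i j ≤ 1) ∧
  (∑ i ∈ ({-1, 0, 1} : Finset ℤ), ∑ j ∈ ({-1, 0, 1} : Finset ℤ), d i j = 1) ∧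
  (0 < t ∧ t < 1) ∧
  (∀ p : Polynomial ℝ,
      (∀ n, p.coeff n ∈
        Subfield.closure
          {x : ℝ | ∃ i ∈ ({-1, 0, 1} : Set ℤ), ∃ j ∈ ({-1, 0, 1} : Set ℤ), x = d i j}) →
      Polynomial.eval t p = 0 → p = 0)

/-- The model is degenerate if `K` is reducible in `ℂ[x,y]`, or has degree `≤ 1` in `x`,
or degree `≤ 1` in `y`. -/
def Degenerate : Prop :=
  ¬ Irreducible (kernelK d t) ∨
    degreeOf 0 (kernelK d t) ≤ 1 ∨ degreeOf 1 (kernelK d t) ≤ 1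

/-- The bihomogenized kernel
`K̄(x₀,x₁,y₀,y₁) = x₀x₁y₀y₁ - t Σ_{i,j=0}^{2} d_{i-1,j-1} x₀^i x₁^{2-i} y₀^j y₁^{2-j}`,
with variables `0 ↦ x₀`, `1 ↦ x₁`, `2 ↦ y₀`, `3 ↦ y₁`. -/
def kernelKbar : MvPolynomial (Fin 4) ℂ :=
  X 0 * X 1 * X 2 * X 3 - C ((t : ℝ) : ℂ) *
    ∑ i ∈ Finset.range 3, ∑ j ∈ Finset.range 3,
      C ((d ((i : ℤ) - 1) ((j : ℤ) - 1) : ℝ) : ℂ) *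
        X 0 ^ i * X 1 ^ (2 - i) * X 2 ^ j * X 3 ^ (2 - j)

/-- `([a:b],[c:e])` lies on the kernel curve `Ē_t ⊆ ℙ¹(ℂ)×ℙ¹(ℂ)`. -/
def OnKernelCurve (a b c e : ℂ) : Prop :=
  eval ![a, b, c, e] (kernelKbar d t) = 0

/-- `([a:b],[c:e])` is a singular point of the kernel curve `Ē_t`: it lies on `Ē_t`
and all four partial derivatives of `K̄` vanish there. -/
def SingularAt (a b c e : ℂ) : Prop :=
  OnKernelCurve d t a b c e ∧
    ∀ k : Fin 4, eval ![a, b, c, e] (pderiv k (kernelKbar d t)) = 0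

/-- `Ā₁(x₀,x₁)`: the coefficient of `y₀²` in `K̄`. -/
def Abar1 : MvPolynomial (Fin 2) ℂ :=
  -(C ((t : ℝ) : ℂ)) *
    (C ((d (-1) 1 : ℝ) : ℂ) * X 1 ^ 2 + C ((d 0 1 : ℝ) : ℂ) * X 0 * X 1 +
      C ((d 1 1 : ℝ) : ℂ) * X 0 ^ 2)

/-- `B̄₁(x₀,x₁)`: the coefficient of `y₀y₁` in `K̄`. -/
def Bbar1 : MvPolynomial (Fin 2) ℂ :=
  X 0 * X 1 - C ((t : ℝ) : ℂ) *
    (C ((d (-1) 0 : ℝ) : ℂ) * X 1 ^ 2 + C ((d 0 0 : ℝ) : ℂ) * X 0 * X 1 +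
      C ((d 1 0 : ℝ) : ℂ) * X 0 ^ 2)

/-- `C̄₁(x₀,x₁)`: the coefficient of `y₁²` in `K̄`. -/
def Cbar1 : MvPolynomial (Fin 2) ℂ :=
  -(C ((t : ℝ) : ℂ)) *
    (C ((d (-1) (-1) : ℝ) : ℂ) * X 1 ^ 2 + C ((d 0 (-1) : ℝ) : ℂ) * X 0 * X 1 +
      C ((d 1 (-1) : ℝ) : ℂ) * X 0 ^ 2)

/-- The discriminant `Δ₁(x₀,x₁) = B̄₁² - 4Ā₁C̄₁`, homogeneous of degree 4. -/
def Delta1 : MvPolynomial (Fin 2) ℂ :=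
  Bbar1 d t ^ 2 - 4 * Abar1 d t * Cbar1 d t

/-- `Ā₂(y₀,y₁)`: the coefficient of `x₀²` in `K̄`. -/
def Abar2 : MvPolynomial (Fin 2) ℂ :=
  -(C ((t : ℝ) : ℂ)) *
    (C ((d 1 (-1) : ℝ) : ℂ) * X 1 ^ 2 + C ((d 1 0 : ℝ) : ℂ) * X 0 * X 1 +
      C ((d 1 1 : ℝ) : ℂ) * X 0 ^ 2)

/-- `B̄₂(y₀,y₁)`: the coefficient of `x₀x₁` in `K̄`. -/
def Bbar2 : MvPolynomial (Fin 2) ℂ :=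
  X 0 * X 1 - C ((t : ℝ) : ℂ) *
    (C ((d 0 (-1) : ℝ) : ℂ) * X 1 ^ 2 + C ((d 0 0 : ℝ) : ℂ) * X 0 * X 1 +
      C ((d 0 1 : ℝ) : ℂ) * X 0 ^ 2)

/-- `C̄₂(y₀,y₁)`: the coefficient of `x₁²` in `K̄`. -/
def Cbar2 : MvPolynomial (Fin 2) ℂ :=
  -(C ((t : ℝ) : ℂ)) *
    (C ((d (-1) (-1) : ℝ) : ℂ) * X 1 ^ 2 + C ((d (-1) 0 : ℝ) : ℂ) * X 0 * X 1 +
      C ((d (-1) 1 : ℝ) : ℂ) * X 0 ^ 2)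

/-- The discriminant `Δ₂(y₀,y₁) = B̄₂² - 4Ā₂C̄₂`, homogeneous of degree 4. -/
def Delta2 : MvPolynomial (Fin 2) ℂ :=
  Bbar2 d t ^ 2 - 4 * Abar2 d t * Cbar2 d t

/-- `[a:b] ∈ ℙ¹(ℂ)` is a double root of the homogeneous polynomial `p`:
`(bX - aY)²` divides `p(X,Y)`. -/
def IsDoubleRootAt (a b : ℂ) (p : MvPolynomial (Fin 2) ℂ) : Prop :=
  (C b * X 0 - C a * X 1) ^ 2 ∣ p

/-- The step set of the model is included in a closed half plane whose boundary passes
through the origin. -/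
def StepSetInHalfPlane : Prop :=
  ∃ u v : ℝ, (u, v) ≠ (0, 0) ∧
    ∀ i ∈ ({-1, 0, 1} : Set ℤ), ∀ j ∈ ({-1, 0, 1} : Set ℤ),
      (i, j) ≠ (0, 0) → d i j ≠ 0 → 0 ≤ u * (i : ℝ) + v * (j : ℝ)

/-- `α₂ = β₂` for the first family of (G0). -/
def alpha2 : ℝ := 1 - 2*t*(d 0 0) + t^2*(d 0 0)^2 - 4*t^2*(d (-1) 1)*(d 1 (-1))

/-- `α₃` for the first family of (G0). -/
def alpha3 : ℝ := 2*t^2*(d 1 0)*(d 0 0) - 2*t*(d 1 0) - 4*t^2*(d 0 1)*(d 1 (-1))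

/-- `α₄` for the first family of (G0). -/
def alpha4 : ℝ := t^2*((d 1 0)^2 - 4*(d 1 1)*(d 1 (-1)))

/-- `β₃` for the first family of (G0). -/
def beta3 : ℝ := 2*t^2*(d 0 1)*(d 0 0) - 2*t*(d 0 1) - 4*t^2*(d 1 0)*(d (-1) 1)

/-- `β₄` for the first family of (G0). -/
def beta4 : ℝ := t^2*((d 0 1)^2 - 4*(d 1 1)*(d (-1) 1))

/-- The kernel polynomial as a function `ℂ × ℂ → ℂ`:
`K(x,y,t) = xy - t Σ_{i,j=0}^{2} d_{i-1,j-1} x^i y^j`. -/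
def kernelKfun (x y : ℂ) : ℂ :=
  x * y - ((t : ℝ) : ℂ) *
    ∑ i ∈ Finset.range 3, ∑ j ∈ Finset.range 3,
      ((d ((i : ℤ) - 1) ((j : ℤ) - 1) : ℝ) : ℂ) * x ^ i * y ^ j

/-- for a nondegenerate model in the first family of (G0), i.e. with
`d_{-1,-1} = d_{-1,0} = d_{0,-1} = 0`: `([0:1],[0:1])` is a singular point of `Ē_t`;
`Δ₁ = α₂x₀²x₁² + α₃x₀³x₁ + α₄x₀⁴` and `Δ₂ = β₂y₀²y₁² + β₃y₀³y₁ + β₄y₀⁴` with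
`α₂ = β₂ ≠ 0`, `α₃² - 4α₂α₄ ≠ 0`, `β₃² - 4β₂β₄ ≠ 0`; in particular `Δ₁` (resp. `Δ₂`)
has a double root at `[0:1]` of multiplicity exactly two, and no other double root. -/

lemma delta1_eq (h1 : d (-1) (-1) = 0) (h2 : d (-1) 0 = 0) (h3 : d 0 (-1) = 0) :
    Delta1 d t =
      C ((alpha2 d t : ℝ) : ℂ) * X 0 ^ 2 * X 1 ^ 2 +
        C ((alpha3 d t : ℝ) : ℂ) * X 0 ^ 3 * X 1 + C ((alpha4 d t : ℝ) : ℂ) * X 0 ^ 4 := by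
  simp only [Delta1, Abar1, Bbar1, Cbar1, alpha2, alpha3, alpha4, h1, h2, h3]
  push_cast
  simp only [map_sub, map_add, map_mul, map_pow, map_one, map_ofNat, map_zero]
  ring

lemma delta2_eq (h1 : d (-1) (-1) = 0) (h2 : d (-1) 0 = 0) (h3 : d 0 (-1) = 0) :
    Delta2 d t =
      C ((alpha2 d t : ℝ) : ℂ) * X 0 ^ 2 * X 1 ^ 2 +
        C ((beta3 d t : ℝ) : ℂ) * X 0 ^ 3 * X 1 + C ((beta4 d t : ℝ) : ℂ) * X 0 ^ 4 := by
  simp only [Delta2, Abar2, Bbar2, Cbar2, alpha2, beta3, beta4, h1, h2, h3]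
  push_cast
  simp only [map_sub, map_add, map_mul, map_pow, map_one, map_ofNat, map_zero]
  ring

lemma singular_pt (h1 : d (-1) (-1) = 0) (h2 : d (-1) 0 = 0) (h3 : d 0 (-1) = 0) :
    SingularAt d t 0 1 0 1 := by
  constructor
  · simp [OnKernelCurve, kernelKbar, Finset.sum_range_succ, h1, h2, h3]
  · intro k
    fin_cases k <;>
      simp [kernelKbar, Finset.sum_range_succ, h1, h2, h3, pderiv_mul, pderiv_X,
        pderiv_C, Pi.single_apply]

lemma notUnit_of_coeff_one (p : Polynomial ℂ) (hp : p.coeff 1 ≠ 0) : ¬ IsUnit p := by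
  intro hu
  rw [Polynomial.isUnit_iff] at hu
  obtain ⟨r, -, rfl⟩ := hu
  simp [Polynomial.coeff_C] at hp

lemma notUnit_mv (p : MvPolynomial (Fin 2) ℂ) (v : Fin 2 → Polynomial ℂ)
    (hp : ¬ IsUnit (aeval v p)) : ¬ IsUnit p := fun hu => hp (hu.map (aeval v))

lemma aux_f_ne (h : WalkHyp d t) (hnd : ¬ Degenerate d t)
    (h1 : d (-1) (-1) = 0) (h2 : d (-1) 0 = 0) (h3 : d 0 (-1) = 0) :
    d 1 (-1) ≠ 0 := by
  intro hf
  have hirr : Irreducible (kernelK d t) := by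
    by_contra hc; exact hnd (Or.inl hc)
  have hfact : kernelK d t =
      X 1 * (X 0 - C ((t:ℝ):ℂ) * (C ((d (-1) 1 : ℝ):ℂ) * X 1 + C ((d 0 0 : ℝ):ℂ) * X 0 +
        C ((d 0 1 : ℝ):ℂ) * X 0 * X 1 + C ((d 1 0 : ℝ):ℂ) * X 0 ^ 2 +
        C ((d 1 1 : ℝ):ℂ) * X 0 ^ 2 * X 1)) := by
    simp only [kernelK, Finset.sum_range_succ, Finset.sum_range_zero]
    norm_num [h1, h2, h3, hf]
    ring
  rcases hirr.isUnit_or_isUnit hfact with hu | hu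
  · exact notUnit_mv _ ![0, Polynomial.X] (by simpa using Polynomial.not_isUnit_X) hu
  · have htd : (1 : ℝ) - t * d 0 0 ≠ 0 := by
      have h00 := (h.1 0 (by simp) 0 (by simp))
      nlinarith [h.2.2.1.1, h.2.2.1.2]
    refine notUnit_mv _ ![Polynomial.X, 0] (notUnit_of_coeff_one _ ?_) hu
    simp [Polynomial.coeff_one]
    intro hc
    apply htd
    have : ((1 - t * d 0 0 : ℝ) : ℂ) = 0 := by push_cast; linear_combination hc
    exact_mod_cast this

lemma aux_m_ne (h : WalkHyp d t) (hnd : ¬ Degenerate d t)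
    (h1 : d (-1) (-1) = 0) (h2 : d (-1) 0 = 0) (h3 : d 0 (-1) = 0) :
    d (-1) 1 ≠ 0 := by
  intro hm
  have hirr : Irreducible (kernelK d t) := by
    by_contra hc; exact hnd (Or.inl hc)
  have hfact : kernelK d t =
      X 0 * (X 1 - C ((t:ℝ):ℂ) * (C ((d 1 (-1) : ℝ):ℂ) * X 0 + C ((d 0 0 : ℝ):ℂ) * X 1 +
        C ((d 1 0 : ℝ):ℂ) * X 0 * X 1 + C ((d 0 1 : ℝ):ℂ) * X 1 ^ 2 +
        C ((d 1 1 : ℝ):ℂ) * X 0 * X 1 ^ 2)) := by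
    simp only [kernelK, Finset.sum_range_succ, Finset.sum_range_zero]
    norm_num [h1, h2, h3, hm]
    ring
  rcases hirr.isUnit_or_isUnit hfact with hu | hu
  · exact notUnit_mv _ ![Polynomial.X, 0] (by simpa using Polynomial.not_isUnit_X) hu
  · have htd : (1 : ℝ) - t * d 0 0 ≠ 0 := by
      have h00 := (h.1 0 (by simp) 0 (by simp))
      nlinarith [h.2.2.1.1, h.2.2.1.2]
    refine notUnit_mv _ ![0, Polynomial.X] (notUnit_of_coeff_one _ ?_) hu
    simp [Polynomial.coeff_one]
    intro hc
    apply htd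
    have : ((1 - t * d 0 0 : ℝ) : ℂ) = 0 := by push_cast; linear_combination hc
    exact_mod_cast this

lemma conic_case (h : WalkHyp d t) (hnd : ¬ Degenerate d t)
    (h1 : d (-1) (-1) = 0) (h2 : d (-1) 0 = 0) (h3 : d 0 (-1) = 0)
    (hf : d 1 (-1) ≠ 0)
    (ha : d 1 0 = 0) (he : d 0 1 = 0) (hg : d 1 1 = 0) : False := by
  have hirr : Irreducible (kernelK d t) := by
    by_contra hc; exact hnd (Or.inl hc)
  have ht0 : (t : ℝ) ≠ 0 := ne_of_gt h.2.2.1.1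
  have htC : ((t : ℝ) : ℂ) ≠ 0 := by exact_mod_cast ht0
  have hfC : ((d 1 (-1) : ℝ) : ℂ) ≠ 0 := by exact_mod_cast hf
  obtain ⟨s, hs⟩ := IsAlgClosed.exists_pow_nat_eq
    ((1 - (t:ℂ) * (d 0 0 : ℝ))^2 - 4 * (t:ℂ)^2 * (d 1 (-1) : ℝ) * (d (-1) 1 : ℝ)) (n := 2) (by norm_num)
  set c : ℂ := ((d 0 0 : ℝ) : ℂ)
  set f : ℂ := ((d 1 (-1) : ℝ) : ℂ)
  set m : ℂ := ((d (-1) 1 : ℝ) : ℂ)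
  set T : ℂ := ((t : ℝ) : ℂ)
  set r1 : ℂ := ((1 - T*c) + s) / (2*T*f)
  set r2 : ℂ := ((1 - T*c) - s) / (2*T*f)
  have S1 : (T * f) * (r1 + r2) = 1 - T * c := by
    simp only [r1, r2]
    field_simp; ring
  have S2 : (T * f) * (r1 * r2) = T * m := by
    have h2tf : (2*T*f) ≠ 0 := by simp [htC, hfC]
    simp only [r1, r2]
    field_simp
    linear_combination (-1 : ℂ) * hs
  have hC1 : (C T * C f : MvPolynomial (Fin 2) ℂ) * (C r1 + C r2) = 1 - C T * C c := by
    simpa only [C_mul, C_add, C_1, C_sub] using congrArg MvPolynomial.C S1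
  have hC2 : (C T * C f : MvPolynomial (Fin 2) ℂ) * (C r1 * C r2) = C T * C m := by
    simpa only [C_mul] using congrArg MvPolynomial.C S2
  have hfact : kernelK d t =
      (C (-(T * f)) * (X 0 - C r1 * X 1)) * (X 0 - C r2 * X 1) := by
    simp only [kernelK, Finset.sum_range_succ, Finset.sum_range_zero]
    norm_num [h1, h2, h3, ha, he, hg]
    linear_combination (-(X 0 * X 1) : MvPolynomial (Fin 2) ℂ) * hC1 + (X 1^2 : MvPolynomial (Fin 2) ℂ) * hC2
  rcases hirr.isUnit_or_isUnit hfact with hu | hu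
  · refine notUnit_mv _ ![Polynomial.X, 1] (notUnit_of_coeff_one _ ?_) hu
    have himg : (aeval ![Polynomial.X, 1] (C (-(T * f)) * (X 0 - C r1 * X 1)) : Polynomial ℂ) =
        Polynomial.C (-(T * f)) * (Polynomial.X - Polynomial.C r1) := by
      simp [Algebra.algebraMap_self]
    rw [himg, Polynomial.coeff_C_mul]
    simp [Polynomial.coeff_C, htC, hfC]
  · refine notUnit_mv _ ![Polynomial.X, 1] (notUnit_of_coeff_one _ ?_) hu
    simp

lemma mem16 (K : Subfield ℝ) : (16:ℝ) ∈ K := by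
  have := natCast_mem K 16; simpa using this

lemma coeffs_mem (K : Subfield ℝ) (c2 c3 c4 : ℝ) (m2 : c2 ∈ K) (m3 : c3 ∈ K) (m4 : c4 ∈ K)
    (n : ℕ) : (Polynomial.C c2 * Polynomial.X^2 + Polynomial.C c3 * Polynomial.X^3 +
      Polynomial.C c4 * Polynomial.X^4).coeff n ∈ K := by
  simp only [Polynomial.coeff_add, Polynomial.coeff_C_mul, Polynomial.coeff_X_pow]
  split_ifs <;> simp_all <;> exact K.zero_mem

lemma coeffs_mem' (K : Subfield ℝ) (c0 c1 c2 : ℝ) (m0 : c0 ∈ K) (m1 : c1 ∈ K) (m2 : c2 ∈ K)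
    (n : ℕ) : (Polynomial.C c0 + Polynomial.C c1 * Polynomial.X + Polynomial.C c2 *
      Polynomial.X^2).coeff n ∈ K := by
  simp only [Polynomial.coeff_add, Polynomial.coeff_C_mul, Polynomial.coeff_X_pow,
    Polynomial.coeff_C, Polynomial.coeff_X]
  split_ifs <;> simp_all <;> exact K.zero_mem

lemma quartic_not_cube (p : MvPolynomial (Fin 2) ℂ) (A B Cc : ℝ)
    (hp : p = C (A:ℂ) * X 0^2 * X 1^2 + C (B:ℂ) * X 0^3 * X 1 + C (Cc:ℂ) * X 0^4)
    (hA : A ≠ 0) : ¬ ((X 0 : MvPolynomial (Fin 2) ℂ)^3 ∣ p) := by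
  rintro ⟨q, hq⟩
  have himg : (Polynomial.X : Polynomial ℂ)^3 ∣
      Polynomial.C (A:ℂ) * Polynomial.X^2 + Polynomial.C (B:ℂ) * Polynomial.X^3 +
        Polynomial.C (Cc:ℂ) * Polynomial.X^4 := by
    refine ⟨aeval ![Polynomial.X, 1] q, ?_⟩
    have := congrArg (aeval (![Polynomial.X, 1] : Fin 2 → Polynomial ℂ)) hq
    rw [hp] at this
    simpa [Algebra.algebraMap_self] using this
  rw [Polynomial.X_pow_dvd_iff] at himg
  have h2 := himg 2 (by norm_num)
  simp [Polynomial.coeff_C_mul, Polynomial.coeff_X_pow] at h2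
  exact hA (by exact_mod_cast h2)

lemma quartic_no_other_double_root (p : MvPolynomial (Fin 2) ℂ) (A B Cc : ℝ)
    (hp : p = C (A:ℂ) * X 0^2 * X 1^2 + C (B:ℂ) * X 0^3 * X 1 + C (Cc:ℂ) * X 0^4)
    (hdisc : B^2 - 4*A*Cc ≠ 0) :
    ∀ a b : ℂ, (a, b) ≠ (0, 0) → IsDoubleRootAt a b p → a = 0 := by
  intro a b _ hdr
  by_contra haa
  obtain ⟨q, hq⟩ := hdr
  rw [hp] at hq
  have hq' : C (A:ℂ) * X 0^2 * X 1^2 + C (B:ℂ) * X 0^3 * X 1 + C (Cc:ℂ) * X 0^4 =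
      (C b * X 0 - C a * X 1) * ((C b * X 0 - C a * X 1) * q) := by rw [hq]; ring
  have E0 : (A:ℂ)*a^2*b^2 + (B:ℂ)*a^3*b + (Cc:ℂ)*a^4 = 0 := by
    have h' := congrArg (eval ![a, b]) hq'
    simp only [eval_add, eval_mul, eval_sub, eval_pow, eval_C, eval_X,
      Matrix.cons_val_zero, Matrix.cons_val_one, Matrix.head_cons] at h'
    linear_combination h'
  have E1 : 2*(A:ℂ)*a*b^2 + 3*(B:ℂ)*a^2*b + 4*(Cc:ℂ)*a^3 = 0 := by
    have h' := congrArg (fun r => eval ![a, b] (pderiv 0 r)) hq'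
    simp only [map_add, pderiv_mul, map_sub, pderiv_pow, pderiv_C, pderiv_X,
      eval_add, eval_mul, eval_sub, eval_pow, eval_C, eval_X, Pi.single_apply,
      Matrix.cons_val_zero, Matrix.cons_val_one, Matrix.head_cons] at h'
    norm_num at h'
    linear_combination h'
  have E2 : 2*(A:ℂ)*a^2*b + (B:ℂ)*a^3 = 0 := by
    have h' := congrArg (fun r => eval ![a, b] (pderiv 1 r)) hq'
    simp only [map_add, pderiv_mul, map_sub, pderiv_pow, pderiv_C, pderiv_X,
      eval_add, eval_mul, eval_sub, eval_pow, eval_C, eval_X, Pi.single_apply,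
      Matrix.cons_val_zero, Matrix.cons_val_one, Matrix.head_cons] at h'
    norm_num at h'
    linear_combination h'
  have hda : ((B^2 - 4*A*Cc : ℝ) : ℂ) * a^4 = 0 := by
    push_cast
    linear_combination ((B:ℂ)*a)*E2 - 2*(A:ℂ)*a*E1 + 4*(A:ℂ)*E0
  rcases mul_eq_zero.1 hda with hz | hz
  · exact hdisc (by exact_mod_cast hz)
  · exact haa (by simpa using pow_eq_zero_iff (n := 4) (by norm_num) |>.1 hz)

lemma dmem (d : ℤ → ℤ → ℝ) (i j : ℤ) (hi : i ∈ ({-1, 0, 1} : Set ℤ)) (hj : j ∈ ({-1, 0, 1} : Set ℤ)) :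
    d i j ∈ Subfield.closure
      {x : ℝ | ∃ i ∈ ({-1, 0, 1} : Set ℤ), ∃ j ∈ ({-1, 0, 1} : Set ℤ), x = d i j} :=
  Subfield.subset_closure ⟨i, hi, j, hj, rfl⟩

lemma alpha2_ne (d : ℤ → ℤ → ℝ) (t : ℝ) (h : WalkHyp d t) : alpha2 d t ≠ 0 := by
  intro h0
  set K := Subfield.closure
      {x : ℝ | ∃ i ∈ ({-1, 0, 1} : Set ℤ), ∃ j ∈ ({-1, 0, 1} : Set ℤ), x = d i j} with hK
  set p : Polynomial ℝ := Polynomial.C 1 + Polynomial.C (-(2 * d 0 0)) * Polynomial.X +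
    Polynomial.C ((d 0 0)^2 - 4*(d (-1) 1)*(d 1 (-1))) * Polynomial.X^2 with hp
  have hmem : ∀ n, p.coeff n ∈ K := by
    intro n
    refine coeffs_mem' K _ _ _ (K.one_mem) ?_ ?_ n
    · exact K.neg_mem (K.mul_mem (by simpa using natCast_mem K 2) (dmem d 0 0 (by simp) (by simp)))
    · exact K.sub_mem (K.pow_mem (dmem d 0 0 (by simp) (by simp)) 2)
        (K.mul_mem (K.mul_mem (by simpa using natCast_mem K 4)
          (dmem d (-1) 1 (by simp) (by simp))) (dmem d 1 (-1) (by simp) (by simp)))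
  have hev : Polynomial.eval t p = alpha2 d t := by
    simp [hp, alpha2]; ring
  have hp0 : p = 0 := h.2.2.2 p hmem (by rw [hev, h0])
  have := congrArg (fun q => Polynomial.coeff q 0) hp0
  simp [hp] at this

lemma disc1_ne (d : ℤ → ℤ → ℝ) (t : ℝ) (h : WalkHyp d t) (hnd : ¬ Degenerate d t)
    (h1 : d (-1) (-1) = 0) (h2 : d (-1) 0 = 0) (h3 : d 0 (-1) = 0)
    (hf : d 1 (-1) ≠ 0) (hm : d (-1) 1 ≠ 0) :
    alpha3 d t ^ 2 - 4 * alpha2 d t * alpha4 d t ≠ 0 := by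
  intro h0
  set K := Subfield.closure
      {x : ℝ | ∃ i ∈ ({-1, 0, 1} : Set ℤ), ∃ j ∈ ({-1, 0, 1} : Set ℤ), x = d i j} with hK
  set a := d 1 0 with hadef
  set e := d 0 1 with hedef
  set c := d 0 0
  set f := d 1 (-1)
  set g := d 1 1 with hgdef
  set m := d (-1) 1
  have ka : a ∈ K := dmem d 1 0 (by simp) (by simp)
  have ke : e ∈ K := dmem d 0 1 (by simp) (by simp)
  have kc : c ∈ K := dmem d 0 0 (by simp) (by simp)
  have kf : f ∈ K := dmem d 1 (-1) (by simp) (by simp)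
  have kg : g ∈ K := dmem d 1 1 (by simp) (by simp)
  have km : m ∈ K := dmem d (-1) 1 (by simp) (by simp)
  have k16 : (16:ℝ) ∈ K := by simpa using natCast_mem K 16
  have k32 : (32:ℝ) ∈ K := by simpa using natCast_mem K 32
  have k4 : (4:ℝ) ∈ K := by simpa using natCast_mem K 4
  set q : Polynomial ℝ := Polynomial.C (16*g*f) * Polynomial.X^2 +
    Polynomial.C (16*a*e*f - 32*c*g*f) * Polynomial.X^3 +
    Polynomial.C (16*f*(-(a*c*e) + e^2*f + c^2*g + a^2*m - 4*m*g*f)) * Polynomial.X^4 with hq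
  have hmem : ∀ n, q.coeff n ∈ K := by
    intro n
    refine coeffs_mem K _ _ _ ?_ ?_ ?_ n
    · exact K.mul_mem (K.mul_mem k16 kg) kf
    · exact K.sub_mem (K.mul_mem (K.mul_mem (K.mul_mem k16 ka) ke) kf)
        (K.mul_mem (K.mul_mem (K.mul_mem k32 kc) kg) kf)
    · refine K.mul_mem (K.mul_mem k16 kf) ?_
      refine K.sub_mem (K.add_mem (K.add_mem (K.add_mem (K.neg_mem ?_) ?_) ?_) ?_) ?_
      · exact K.mul_mem (K.mul_mem ka kc) ke
      · exact K.mul_mem (K.pow_mem ke 2) kf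
      · exact K.mul_mem (K.pow_mem kc 2) kg
      · exact K.mul_mem (K.pow_mem ka 2) km
      · exact K.mul_mem (K.mul_mem (K.mul_mem k4 km) kg) kf
  have hev : Polynomial.eval t q = alpha3 d t ^ 2 - 4 * alpha2 d t * alpha4 d t := by
    simp [hq, alpha2, alpha3, alpha4]; ring
  have hq0 : q = 0 := h.2.2.2 q hmem (by rw [hev, h0])
  have t2 := congrArg (fun r => Polynomial.coeff r 2) hq0
  have t3 := congrArg (fun r => Polynomial.coeff r 3) hq0
  have t4 := congrArg (fun r => Polynomial.coeff r 4) hq0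
  simp only [hq, Polynomial.coeff_add, Polynomial.coeff_C_mul, Polynomial.coeff_X_pow,
    Polynomial.coeff_zero] at t2 t3 t4
  norm_num at t2 t3 t4
  have hfpos : 0 < f := lt_of_le_of_ne (h.1 1 (by simp) (-1) (by simp)).1 (Ne.symm hf)
  have hmpos : 0 < m := lt_of_le_of_ne (h.1 (-1) (by simp) 1 (by simp)).1 (Ne.symm hm)
  have hg0 : g = 0 := t2.resolve_right hf
  have hae : a * e = 0 := by
    rw [hg0] at t3
    have h16 : (16:ℝ) * (a*e) * f = 0 := by linarith
    rcases mul_eq_zero.1 h16 with hz | hz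
    · rcases mul_eq_zero.1 hz with hz' | hz'
      · norm_num at hz'
      · exact hz'
    · exact absurd hz hf
  have hsum : e^2*f + a^2*m = 0 := by
    have t4' := t4.resolve_left hf
    have hace : a*c*e = 0 := by
      rw [show a*c*e = c*(a*e) by ring, hae, mul_zero]
    rw [hg0, hace] at t4'
    linarith
  have hanneg : 0 ≤ a := (h.1 1 (by simp) 0 (by simp)).1
  have henneg : 0 ≤ e := (h.1 0 (by simp) 1 (by simp)).1
  have hef : e^2*f = 0 :=
    le_antisymm (by nlinarith [mul_nonneg (sq_nonneg a) hmpos.le]) (by positivity)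
  have he0 : e = 0 := by
    have he2 : e^2 = 0 := by
      rcases mul_eq_zero.1 hef with hz | hz
      · exact hz
      · exact absurd hz hf
    exact pow_eq_zero_iff (by norm_num) |>.1 he2
  have ham : a^2*m = 0 := by linarith
  have ha0 : a = 0 := by
    have ha2 : a^2 = 0 := by
      rcases mul_eq_zero.1 ham with hz | hz
      · exact hz
      · exact absurd hz (ne_of_gt hmpos)
    exact pow_eq_zero_iff (by norm_num) |>.1 ha2
  exact conic_case d t h hnd h1 h2 h3 hf ha0 he0 hg0

lemma disc2_ne (d : ℤ → ℤ → ℝ) (t : ℝ) (h : WalkHyp d t) (hnd : ¬ Degenerate d t)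
    (h1 : d (-1) (-1) = 0) (h2 : d (-1) 0 = 0) (h3 : d 0 (-1) = 0)
    (hf : d 1 (-1) ≠ 0) (hm : d (-1) 1 ≠ 0) :
    beta3 d t ^ 2 - 4 * alpha2 d t * beta4 d t ≠ 0 := by
  intro h0
  set K := Subfield.closure
      {x : ℝ | ∃ i ∈ ({-1, 0, 1} : Set ℤ), ∃ j ∈ ({-1, 0, 1} : Set ℤ), x = d i j} with hK
  set a := d 1 0 with hadef
  set e := d 0 1 with hedef
  set c := d 0 0
  set f := d 1 (-1)
  set g := d 1 1 with hgdef
  set m := d (-1) 1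
  have ka : a ∈ K := dmem d 1 0 (by simp) (by simp)
  have ke : e ∈ K := dmem d 0 1 (by simp) (by simp)
  have kc : c ∈ K := dmem d 0 0 (by simp) (by simp)
  have kf : f ∈ K := dmem d 1 (-1) (by simp) (by simp)
  have kg : g ∈ K := dmem d 1 1 (by simp) (by simp)
  have km : m ∈ K := dmem d (-1) 1 (by simp) (by simp)
  have k16 : (16:ℝ) ∈ K := by simpa using natCast_mem K 16
  have k32 : (32:ℝ) ∈ K := by simpa using natCast_mem K 32
  have k4 : (4:ℝ) ∈ K := by simpa using natCast_mem K 4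
  set q : Polynomial ℝ := Polynomial.C (16*g*m) * Polynomial.X^2 +
    Polynomial.C (16*a*e*m - 32*c*g*m) * Polynomial.X^3 +
    Polynomial.C (16*m*(-(a*c*e) + a^2*m + c^2*g + e^2*f - 4*f*g*m)) * Polynomial.X^4 with hq
  have hmem : ∀ n, q.coeff n ∈ K := by
    intro n
    refine coeffs_mem K _ _ _ ?_ ?_ ?_ n
    · exact K.mul_mem (K.mul_mem k16 kg) km
    · exact K.sub_mem (K.mul_mem (K.mul_mem (K.mul_mem k16 ka) ke) km)
        (K.mul_mem (K.mul_mem (K.mul_mem k32 kc) kg) km)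
    · refine K.mul_mem (K.mul_mem k16 km) ?_
      refine K.sub_mem (K.add_mem (K.add_mem (K.add_mem (K.neg_mem ?_) ?_) ?_) ?_) ?_
      · exact K.mul_mem (K.mul_mem ka kc) ke
      · exact K.mul_mem (K.pow_mem ka 2) km
      · exact K.mul_mem (K.pow_mem kc 2) kg
      · exact K.mul_mem (K.pow_mem ke 2) kf
      · exact K.mul_mem (K.mul_mem (K.mul_mem k4 kf) kg) km
  have hev : Polynomial.eval t q = beta3 d t ^ 2 - 4 * alpha2 d t * beta4 d t := by
    simp [hq, alpha2, beta3, beta4]; ring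
  have hq0 : q = 0 := h.2.2.2 q hmem (by rw [hev, h0])
  have t2 := congrArg (fun r => Polynomial.coeff r 2) hq0
  have t3 := congrArg (fun r => Polynomial.coeff r 3) hq0
  have t4 := congrArg (fun r => Polynomial.coeff r 4) hq0
  simp only [hq, Polynomial.coeff_add, Polynomial.coeff_C_mul, Polynomial.coeff_X_pow,
    Polynomial.coeff_zero] at t2 t3 t4
  norm_num at t2 t3 t4
  have hfpos : 0 < f := lt_of_le_of_ne (h.1 1 (by simp) (-1) (by simp)).1 (Ne.symm hf)
  have hmpos : 0 < m := lt_of_le_of_ne (h.1 (-1) (by simp) 1 (by simp)).1 (Ne.symm hm)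
  have hg0 : g = 0 := t2.resolve_right hm
  have hae : a * e = 0 := by
    rw [hg0] at t3
    have h16 : (16:ℝ) * (a*e) * m = 0 := by linarith
    rcases mul_eq_zero.1 h16 with hz | hz
    · rcases mul_eq_zero.1 hz with hz' | hz'
      · norm_num at hz'
      · exact hz'
    · exact absurd hz hm
  have hsum : a^2*m + e^2*f = 0 := by
    have t4' := t4.resolve_left hm
    have hace : a*c*e = 0 := by
      rw [show a*c*e = c*(a*e) by ring, hae, mul_zero]
    rw [hg0, hace] at t4'
    linarith
  have hef : e^2*f = 0 :=
    le_antisymm (by nlinarith [mul_nonneg (sq_nonneg a) hmpos.le]) (by positivity)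
  have he0 : e = 0 := by
    have he2 : e^2 = 0 := by
      rcases mul_eq_zero.1 hef with hz | hz
      · exact hz
      · exact absurd hz (ne_of_gt hfpos)
    exact pow_eq_zero_iff (by norm_num) |>.1 he2
  have ham : a^2*m = 0 := by linarith
  have ha0 : a = 0 := by
    have ha2 : a^2 = 0 := by
      rcases mul_eq_zero.1 ham with hz | hz
      · exact hz
      · exact absurd hz (ne_of_gt hmpos)
    exact pow_eq_zero_iff (by norm_num) |>.1 ha2
  exact conic_case d t h hnd h1 h2 h3 hf ha0 he0 hg0

theorem first_G0_family_discriminants (h : WalkHyp d t) (hnd : ¬ Degenerate d t)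
    (h1 : d (-1) (-1) = 0) (h2 : d (-1) 0 = 0) (h3 : d 0 (-1) = 0) :
    SingularAt d t 0 1 0 1 ∧
    Delta1 d t =
      C ((alpha2 d t : ℝ) : ℂ) * X 0 ^ 2 * X 1 ^ 2 +
        C ((alpha3 d t : ℝ) : ℂ) * X 0 ^ 3 * X 1 + C ((alpha4 d t : ℝ) : ℂ) * X 0 ^ 4 ∧
    Delta2 d t =
      C ((alpha2 d t : ℝ) : ℂ) * X 0 ^ 2 * X 1 ^ 2 +
        C ((beta3 d t : ℝ) : ℂ) * X 0 ^ 3 * X 1 + C ((beta4 d t : ℝ) : ℂ) * X 0 ^ 4 ∧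
    alpha2 d t ≠ 0 ∧
    alpha3 d t ^ 2 - 4 * alpha2 d t * alpha4 d t ≠ 0 ∧
    beta3 d t ^ 2 - 4 * alpha2 d t * beta4 d t ≠ 0 ∧
    IsDoubleRootAt 0 1 (Delta1 d t) ∧ ¬ ((X 0 : MvPolynomial (Fin 2) ℂ) ^ 3 ∣ Delta1 d t) ∧
    (∀ a b : ℂ, (a, b) ≠ (0, 0) → IsDoubleRootAt a b (Delta1 d t) → a = 0) ∧
    IsDoubleRootAt 0 1 (Delta2 d t) ∧ ¬ ((X 0 : MvPolynomial (Fin 2) ℂ) ^ 3 ∣ Delta2 d t) ∧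
    (∀ a b : ℂ, (a, b) ≠ (0, 0) → IsDoubleRootAt a b (Delta2 d t) → a = 0) := by
  have hf : d 1 (-1) ≠ 0 := aux_f_ne d t h hnd h1 h2 h3
  have hm : d (-1) 1 ≠ 0 := aux_m_ne d t h hnd h1 h2 h3
  have hD1 := delta1_eq d t h1 h2 h3
  have hD2 := delta2_eq d t h1 h2 h3
  have ha2 : alpha2 d t ≠ 0 := alpha2_ne d t h
  have hd1 : alpha3 d t ^ 2 - 4 * alpha2 d t * alpha4 d t ≠ 0 :=
    disc1_ne d t h hnd h1 h2 h3 hf hm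
  have hd2 : beta3 d t ^ 2 - 4 * alpha2 d t * beta4 d t ≠ 0 :=
    disc2_ne d t h hnd h1 h2 h3 hf hm
  refine ⟨singular_pt d t h1 h2 h3, hD1, hD2, ha2, hd1, hd2, ?_, ?_, ?_, ?_, ?_, ?_⟩
  · refine ⟨C ((alpha2 d t : ℝ) : ℂ) * X 1 ^ 2 + C ((alpha3 d t : ℝ) : ℂ) * X 0 * X 1 +
      C ((alpha4 d t : ℝ) : ℂ) * X 0 ^ 2, ?_⟩
    rw [hD1]
    simp only [map_zero, map_one, one_mul, zero_mul, sub_zero]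
    ring
  · exact quartic_not_cube _ _ _ _ hD1 ha2
  · exact quartic_no_other_double_root _ _ _ _ hD1 hd1
  · refine ⟨C ((alpha2 d t : ℝ) : ℂ) * X 1 ^ 2 + C ((beta3 d t : ℝ) : ℂ) * X 0 * X 1 +
      C ((beta4 d t : ℝ) : ℂ) * X 0 ^ 2, ?_⟩
    rw [hD2]
    simp only [map_zero, map_one, one_mul, zero_mul, sub_zero]
    ring
  · exact quartic_not_cube _ _ _ _ hD2 ha2
  · exact quartic_no_other_double_root _ _ _ _ hD2 hd2

end
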